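/- arXiv:2105.04469 — 4 statements merged into one kernel-verified Lean document; each statement's English description precedes it below -/
import Mathlib

section
/- Let A be a unital C*-algebra, let τ : A → ℂ be a positive tracial linear functional, let a ∈ A be self-adjoint and let b ∈ A satisfy 0 ≤ b. Then τ(((a−b)₊)²) ≤ τ(a²); equivalently, the tracial 2-seminorm satisfies ‖(a−b)₊‖_{2,τ} ≤ ‖a‖_{2,τ}. (Both τ(((a−b)₊)²) and τ(a²) are nonnegative real numbers.) -/
open scoped ComplexOrder ComplexStarModule

section aux
variable {A : Type*} [CStarAlgebra A] [PartialOrder A] [StarOrderedRing A]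

lemma tau_nonneg_of_nonneg (τ : A →ₗ[ℂ] ℂ) (hpos : ∀ x : A, 0 ≤ τ (star x * x))
    {u : A} (hu : 0 ≤ u) : 0 ≤ τ u := by
  have h : star (CFC.sqrt u) * CFC.sqrt u = u := by
    rw [(IsSelfAdjoint.of_nonneg (CFC.sqrt_nonneg (a := u))).star_eq, ← sq, CFC.sq_sqrt u hu]
  simpa [h] using hpos (CFC.sqrt u)

lemma tau_conj_of_nonneg (τ : A →ₗ[ℂ] ℂ) (hpos : ∀ x : A, 0 ≤ τ (star x * x))
    {u : A} (hu : 0 ≤ u) : (starRingEnd ℂ) (τ u) = τ u :=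
  Complex.conj_eq_iff_im.mpr ((Complex.nonneg_iff.mp (tau_nonneg_of_nonneg τ hpos hu)).2.symm)

lemma tau_map_star (τ : A →ₗ[ℂ] ℂ) (hpos : ∀ x : A, 0 ≤ τ (star x * x)) (x : A) :
    τ (star x) = (starRingEnd ℂ) (τ x) := by
  have hx := CStarAlgebra.linear_combination_nonneg x
  have hsx : star x = ((ℜ x : A)⁺ - (ℜ x : A)⁻) - Complex.I • ((ℑ x : A)⁺ - (ℑ x : A)⁻) := by
    conv_lhs => rw [← hx]
    rw [← smul_sub]
    rw [star_add, star_sub, star_smul,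
      (IsSelfAdjoint.of_nonneg (CFC.posPart_nonneg ((ℜ x : A)))).star_eq,
      (IsSelfAdjoint.of_nonneg (CFC.negPart_nonneg ((ℜ x : A)))).star_eq,
      star_sub,
      (IsSelfAdjoint.of_nonneg (CFC.posPart_nonneg ((ℑ x : A)))).star_eq,
      (IsSelfAdjoint.of_nonneg (CFC.negPart_nonneg ((ℑ x : A)))).star_eq,
      Complex.star_def, Complex.conj_I, neg_smul, ← sub_eq_add_neg]
  have e1 := tau_conj_of_nonneg τ hpos (CFC.posPart_nonneg (ℜ x : A))
  have e2 := tau_conj_of_nonneg τ hpos (CFC.negPart_nonneg (ℜ x : A))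
  have e3 := tau_conj_of_nonneg τ hpos (CFC.posPart_nonneg (ℑ x : A))
  have e4 := tau_conj_of_nonneg τ hpos (CFC.negPart_nonneg (ℑ x : A))
  rw [hsx]
  conv_rhs => rw [← hx, ← smul_sub]
  simp only [map_sub, map_add, map_smul, smul_eq_mul, map_mul, Complex.conj_I, e1, e2, e3, e4]
  ring

lemma tau_cauchy_schwarz (τ : A →ₗ[ℂ] ℂ) (hpos : ∀ x : A, 0 ≤ τ (star x * x)) (x y : A) :
    ‖τ (star x * y)‖ * ‖τ (star y * x)‖ ≤ (τ (star x * x)).re * (τ (star y * y)).re := by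
  letI core : PreInnerProductSpace.Core ℂ A :=
  { inner := fun x y => τ (star x * y)
    conj_inner_symm := fun x y => by
      show (starRingEnd ℂ) (τ (star y * x)) = τ (star x * y)
      rw [← tau_map_star τ hpos (star y * x), star_mul, star_star]
    re_inner_nonneg := fun x => (Complex.nonneg_iff.mp (hpos x)).1
    add_left := fun x y z => by
      show τ (star (x + y) * z) = τ (star x * z) + τ (star y * z)
      rw [star_add, add_mul, map_add]
    smul_left := fun x y r => by
      show τ (star (r • x) * y) = (starRingEnd ℂ) r * τ (star x * y)
      rw [star_smul, smul_mul_assoc, map_smul, smul_eq_mul, Complex.star_def] }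
  exact InnerProductSpace.Core.inner_mul_inner_self_le (𝕜 := ℂ) (F := A) x y

end aux

/-- Let `A` be a unital C*-algebra, `τ : A → ℂ` a positive tracial linear
functional, `a ∈ A` self-adjoint and `0 ≤ b`.  Then `τ(((a−b)₊)²) ≤ τ(a²)`; both quantities
are nonnegative real numbers (nonnegativity and the inequality are expressed via the partial
order on `ℂ`, in which `0 ≤ z` iff `z` is a nonnegative real). -/
theorem tracial_posPart_sq_le {A : Type*} [CStarAlgebra A] [PartialOrder A] [StarOrderedRing A]
    (τ : A →ₗ[ℂ] ℂ)
    (hpos : ∀ x : A, 0 ≤ τ (star x * x))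
    (htracial : ∀ x y : A, τ (x * y) = τ (y * x))
    (a b : A) (ha : IsSelfAdjoint a) (hb : 0 ≤ b) :
    0 ≤ τ ((a - b)⁺ ^ 2) ∧ τ ((a - b)⁺ ^ 2) ≤ τ (a ^ 2) := by
  set c := a - b with hc
  set p := c⁺ with hp
  have hpnn : 0 ≤ p := CFC.posPart_nonneg c
  have hpsa : IsSelfAdjoint p := .of_nonneg hpnn
  have hcsa : IsSelfAdjoint c := ha.sub (IsSelfAdjoint.of_nonneg hb)
  have hsq : star p * p = p ^ 2 := by rw [hpsa.star_eq, sq]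
  have hP : 0 ≤ τ (p ^ 2) := hsq ▸ hpos p
  refine ⟨hP, ?_⟩
  have hasq : star a * a = a ^ 2 := by rw [ha.star_eq, sq]
  have hQ : 0 ≤ τ (a ^ 2) := hasq ▸ hpos a
  -- p * c = p^2
  have hpc : p * c = p ^ 2 := by
    conv_lhs => rw [← CFC.posPart_sub_negPart c hcsa]
    rw [mul_sub, CFC.posPart_mul_negPart, sub_zero, sq]
  -- τ (p * b) ≥ 0
  have hpb : 0 ≤ τ (p * b) := by
    set s := CFC.sqrt p with hs
    set t := CFC.sqrt b with ht
    have hss : s * s = p := by rw [← sq, hs, CFC.sq_sqrt p hpnn]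
    have htt : t * t = b := by rw [← sq, ht, CFC.sq_sqrt b hb]
    have hssa : IsSelfAdjoint s := .of_nonneg (CFC.sqrt_nonneg _)
    have htsa : IsSelfAdjoint t := .of_nonneg (CFC.sqrt_nonneg _)
    have h1 : p * b = s * (s * t * t) := by
      rw [← hss, ← htt]; noncomm_ring
    have h2 : τ (p * b) = τ (star (t * s) * (t * s)) := by
      rw [star_mul, hssa.star_eq, htsa.star_eq, h1, htracial, ← mul_assoc]
    rw [h2]; exact hpos _
  -- τ (p * a) = τ (p^2) + τ (p * b)
  have hpa : τ (p * a) = τ (p ^ 2) + τ (p * b) := by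
    have h : p * a = p * c + p * b := by rw [hc]; noncomm_ring
    rw [h, map_add, hpc]
  set P := (τ (p ^ 2)).re with hPre
  set Q := (τ (a ^ 2)).re with hQre
  have hPnn : 0 ≤ P := (Complex.nonneg_iff.mp hP).1
  have hQnn : 0 ≤ Q := (Complex.nonneg_iff.mp hQ).1
  have hpa_nonneg : 0 ≤ τ (p * a) := by rw [hpa]; exact add_nonneg hP hpb
  have hnorm_pa : ‖τ (p * a)‖ = (τ (p * a)).re := by
    obtain ⟨h1, h2⟩ := Complex.nonneg_iff.mp hpa_nonneg
    rw [Complex.norm_def, Complex.normSq_apply, ← h2]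
    simp [Real.sqrt_mul_self h1]
  have hle : τ (p ^ 2) ≤ τ (p * a) := by
    rw [hpa]; exact le_add_of_nonneg_right hpb
  have hPle : P ≤ (τ (p * a)).re := (Complex.le_def.mp hle).1
  have hcs := tau_cauchy_schwarz τ hpos p a
  rw [hpsa.star_eq, ha.star_eq, htracial a p, ← pow_two p, ← pow_two a] at hcs
  have hPP : P * P ≤ P * Q := by
    calc P * P ≤ ‖τ (p * a)‖ * ‖τ (p * a)‖ := by
          apply mul_le_mul (by rw [hnorm_pa]; exact hPle) (by rw [hnorm_pa]; exact hPle) hPnn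
          exact norm_nonneg _
      _ ≤ P * Q := hcs
  have hPQ : P ≤ Q := by
    rcases eq_or_lt_of_le hPnn with h0 | h0
    · rw [← h0] at hPP ⊢; exact hQnn
    · exact le_of_mul_le_mul_left hPP h0
  exact Complex.le_def.mpr ⟨hPQ,
    ((Complex.nonneg_iff.mp hP).2.symm).trans (Complex.nonneg_iff.mp hQ).2⟩
end

section
/- Let A be a unital C*-algebra, let τ : A → ℂ be a positive tracial linear functional, let a ∈ A be self-adjoint and let b ∈ A satisfy 0 ≤ b. Then τ(((a−b)₋)² + b² + b(a−b) + (a−b)b) is a nonnegative real number. -/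
open scoped ComplexOrder

lemma aux_mul_nonneg {A : Type*} [CStarAlgebra A]
    [PartialOrder A] [StarOrderedRing A]
    (τ : A →ₗ[ℂ] ℂ)
    (hpos : ∀ x : A, 0 ≤ τ (star x * x))
    (htracial : ∀ x y : A, τ (x * y) = τ (y * x))
    (x y : A) (hx : 0 ≤ x) (hy : 0 ≤ y) : 0 ≤ τ (x * y) := by
  have hsx : IsSelfAdjoint (CFC.sqrt x) := IsSelfAdjoint.of_nonneg (CFC.sqrt_nonneg (a := x))
  have hsy : IsSelfAdjoint (CFC.sqrt y) := IsSelfAdjoint.of_nonneg (CFC.sqrt_nonneg (a := y))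
  have e1 : star (CFC.sqrt x * CFC.sqrt y) * (CFC.sqrt x * CFC.sqrt y)
      = CFC.sqrt y * (x * CFC.sqrt y) := by
    rw [star_mul, hsx.star_eq, hsy.star_eq, mul_assoc, ← mul_assoc (CFC.sqrt x),
      CFC.sqrt_mul_sqrt_self x hx]
  have e2 : τ (x * y) = τ (CFC.sqrt y * (x * CFC.sqrt y)) := by
    calc τ (x * y) = τ (x * (CFC.sqrt y * CFC.sqrt y)) := by rw [CFC.sqrt_mul_sqrt_self y hy]
    _ = τ ((x * CFC.sqrt y) * CFC.sqrt y) := by rw [mul_assoc]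
    _ = τ (CFC.sqrt y * (x * CFC.sqrt y)) := htracial _ _
  rw [e2, ← e1]
  exact hpos _
/-- Let `A` be a unital C*-algebra, `τ : A → ℂ` a positive tracial linear
functional, `a ∈ A` self-adjoint and `0 ≤ b`.  Then
`τ(((a−b)₋)² + b² + b(a−b) + (a−b)b)` is a nonnegative real number (expressed via the
partial order on `ℂ`, in which `0 ≤ z` iff `z` is a nonnegative real number). -/
theorem tracial_negPart_expression_nonneg {A : Type*} [CStarAlgebra A]
    [PartialOrder A] [StarOrderedRing A]
    (τ : A →ₗ[ℂ] ℂ)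
    (hpos : ∀ x : A, 0 ≤ τ (star x * x))
    (htracial : ∀ x y : A, τ (x * y) = τ (y * x))
    (a b : A) (ha : IsSelfAdjoint a) (hb : 0 ≤ b) :
    0 ≤ τ ((a - b)⁻ ^ 2 + b ^ 2 + b * (a - b) + (a - b) * b) := by
  set c := a - b with hc
  have hcsa : IsSelfAdjoint c := ha.sub hb.isSelfAdjoint
  have hdecomp : c⁺ - c⁻ = c := CFC.posPart_sub_negPart c hcsa
  have hnn : 0 ≤ c⁻ := CFC.negPart_nonneg c
  have hpn : 0 ≤ c⁺ := CFC.posPart_nonneg c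
  have hd : IsSelfAdjoint (b - c⁻) := hb.isSelfAdjoint.sub hnn.isSelfAdjoint
  have hcc : c = c⁺ - c⁻ := hdecomp.symm
  have key : c⁻ ^ 2 + b ^ 2 + b * c + c * b
      = (b - c⁻) * (b - c⁻) + b * c⁺ + c⁺ * b := by
    calc c⁻ ^ 2 + b ^ 2 + b * c + c * b
        = c⁻ ^ 2 + b ^ 2 + b * (c⁺ - c⁻) + (c⁺ - c⁻) * b := by rw [← hcc]
      _ = (b - c⁻) * (b - c⁻) + b * c⁺ + c⁺ * b := by noncomm_ring
  rw [key, map_add, map_add]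
  have h1 : 0 ≤ τ ((b - c⁻) * (b - c⁻)) := by have := hpos (b - c⁻); rwa [hd.star_eq] at this
  have h2 := aux_mul_nonneg τ hpos htracial b c⁺ hb hpn
  have h3 := aux_mul_nonneg τ hpos htracial c⁺ b hpn hb
  positivity
end

section
/- Fix n ≥ 1. There exists an injective unital star-algebra homomorphism ι from M_n(ℂ) into the continuous functions C([0,1], Matrix (Fin n × Fin n) (Fin n × Fin n) ℂ) (with pointwise operations) such that: (1) ι(x)(0) = x ⊗ₖ 1 for every x ∈ M_n(ℂ); (2) ι(x)(1) = 1 ⊗ₖ x for every x ∈ M_n(ℂ); and (3) for every unitary v ∈ M_n(ℂ), every x ∈ M_n(ℂ) and every t ∈ [0,1], one has ι(v x v*)(t) = (v ⊗ₖ v) · ι(x)(t) · (v ⊗ₖ v)*. In other words, for every unitary representation ν of a group the map x ↦ (t ↦ exp(t·i·a)(x ⊗ₖ 1)exp(t·i·a)*), where a is self-adjoint with exp(i·a) equal to the flip unitary, gives a unital embedding of M_n(ℂ) into the join M_n(ℂ) ⋆ M_n(ℂ) intertwining Ad(ν) with Ad(ν ⊗ ν). -/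
open Matrix
open scoped Kronecker


noncomputable section

def Fm (n : ℕ) : Matrix (Fin n × Fin n) (Fin n × Fin n) ℂ :=
  (1 : Matrix (Fin n × Fin n) (Fin n × Fin n) ℂ).submatrix Prod.swap id

lemma Fm_eq (n : ℕ) : Fm n = (1 : Matrix (Fin n × Fin n) (Fin n × Fin n) ℂ).submatrix
    (Equiv.refl _) Prod.swap := by
  ext p q
  simp [Fm, Matrix.one_apply, Prod.ext_iff, eq_comm, and_comm]

lemma Fm_mul (n : ℕ) (M : Matrix (Fin n × Fin n) (Fin n × Fin n) ℂ) :
    Fm n * M = M.submatrix Prod.swap id := by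
  simpa [Fm] using Matrix.submatrix_mul_equiv (1 : Matrix (Fin n × Fin n) (Fin n × Fin n) ℂ) M
    Prod.swap (Equiv.refl _) id

lemma mul_Fm (n : ℕ) (M : Matrix (Fin n × Fin n) (Fin n × Fin n) ℂ) :
    M * Fm n = M.submatrix id Prod.swap := by
  rw [Fm_eq]
  simpa using Matrix.submatrix_mul_equiv M (1 : Matrix (Fin n × Fin n) (Fin n × Fin n) ℂ)
    id (Equiv.refl _) Prod.swap

lemma Fm_mul_Fm (n : ℕ) : Fm n * Fm n = 1 := by
  rw [Fm_mul]
  ext p q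
  simp [Fm, Matrix.one_apply, Prod.ext_iff, and_comm]

lemma star_Fm (n : ℕ) : star (Fm n) = Fm n := by
  ext p q
  simp [Fm, Matrix.conjTranspose_apply, Matrix.one_apply, Prod.ext_iff, eq_comm, and_comm]

lemma Fm_kron_comm (n : ℕ) (a b : Matrix (Fin n) (Fin n) ℂ) :
    Fm n * (a ⊗ₖ b) = (b ⊗ₖ a) * Fm n := by
  rw [Fm_mul, mul_Fm]
  ext p q
  simp [Matrix.kroneckerMap_apply, mul_comm]

end

noncomputable section
open Complex

def cc (t : ℝ) : ℂ := Complex.exp (Real.pi * Complex.I * t)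

lemma cc_add (s t : ℝ) : cc (s + t) = cc s * cc t := by
  rw [cc, cc, cc, ← Complex.exp_add]
  congr 1
  push_cast
  ring

lemma cc_zero : cc 0 = 1 := by simp [cc]

lemma cc_one : cc 1 = -1 := by
  simp [cc, Complex.exp_pi_mul_I]

lemma conj_cc (t : ℝ) : (starRingEnd ℂ) (cc t) = cc (-t) := by
  rw [cc, cc, ← Complex.exp_conj]
  congr 1
  simp only [_root_.map_mul, Complex.conj_I, Complex.conj_ofReal]
  push_cast
  ring

def Um (n : ℕ) (t : ℝ) : Matrix (Fin n × Fin n) (Fin n × Fin n) ℂ :=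
  ((1 + cc t) / 2) • 1 + ((1 - cc t) / 2) • Fm n

lemma Um_zero (n : ℕ) : Um n 0 = 1 := by simp [Um, cc_zero]

lemma Um_one (n : ℕ) : Um n 1 = Fm n := by simp [Um, cc_one]

lemma Um_mul (n : ℕ) (s t : ℝ) : Um n s * Um n t = Um n (s + t) := by
  simp only [Um, add_mul, mul_add, smul_mul_assoc, mul_smul_comm, smul_smul, one_mul, mul_one,
    Fm_mul_Fm, cc_add]
  module

lemma star_Um (n : ℕ) (t : ℝ) : star (Um n t) = Um n (-t) := by
  simp only [Um, star_add, star_smul, star_one, star_Fm, RCLike.star_def, map_div₀, map_add,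
    map_sub, _root_.map_one, map_ofNat, conj_cc]

lemma Um_unitary (n : ℕ) (t : ℝ) : Um n t * star (Um n t) = 1 := by
  rw [star_Um, Um_mul]
  simp [Um_zero]

lemma star_Um_mul (n : ℕ) (t : ℝ) : star (Um n t) * Um n t = 1 := by
  rw [star_Um, Um_mul]
  simp [Um_zero]

lemma Um_comm_kron (n : ℕ) (v : Matrix (Fin n) (Fin n) ℂ) :
    Um n t * (v ⊗ₖ v) = (v ⊗ₖ v) * Um n t := by
  simp only [Um, add_mul, mul_add, smul_mul_assoc, mul_smul_comm, one_mul, mul_one,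
    Fm_kron_comm]

lemma continuous_cc : Continuous cc := by
  unfold cc
  fun_prop

lemma continuous_Um (n : ℕ) : Continuous (Um n) := by
  unfold Um
  exact (((continuous_const.add continuous_cc).div_const 2).smul continuous_const).add
    (((continuous_const.sub continuous_cc).div_const 2).smul continuous_const)

end

lemma star_kron {n : ℕ} (x y : Matrix (Fin n) (Fin n) ℂ) :
    star (x ⊗ₖ y) = star x ⊗ₖ star y := by
  ext p q
  simp [Matrix.conjTranspose_apply, Matrix.star_apply]

lemma conj_mul_aux {m : Type*} [Fintype m] [DecidableEq m] (U A B : Matrix m m ℂ)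
    (hU : star U * U = 1) :
    U * (A * B) * star U = (U * A * star U) * (U * B * star U) := by
  simp only [Matrix.mul_assoc]
  rw [← Matrix.mul_assoc (star U) U (B * star U), hU, Matrix.one_mul]

lemma conj_comm_aux {m : Type*} [Fintype m] [DecidableEq m]
    (U W A : Matrix m m ℂ) (h : U * W = W * U) :
    U * (W * A * star W) * star U = W * (U * A * star U) * star W := by
  have h' : star W * star U = star U * star W := by
    rw [← Matrix.star_mul, ← Matrix.star_mul, h]
  calc U * (W * A * star W) * star U
      = (U * W) * (A * (star W * star U)) := by simp only [Matrix.mul_assoc]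
    _ = (W * U) * (A * (star U * star W)) := by rw [h, h']
    _ = W * (U * A * star U) * star W := by simp only [Matrix.mul_assoc]

/-- For `n ≥ 1` there is an injective unital star-algebra homomorphism
`ι : Mₙ(ℂ) → C([0,1], Mₙ(ℂ) ⊗ Mₙ(ℂ))` with `ι(x)(0) = x ⊗ₖ 1`, `ι(x)(1) = 1 ⊗ₖ x`, and
`ι(v x v*)(t) = (v ⊗ₖ v) ι(x)(t) (v ⊗ₖ v)*` for every unitary `v ∈ Mₙ(ℂ)`.  In
particular `ι` is a unital embedding of `Mₙ(ℂ)` into the join `Mₙ(ℂ) ⋆ Mₙ(ℂ)`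
intertwining `Ad(ν)` with `Ad(ν ⊗ ν)` for every unitary representation `ν`. -/
theorem embedding_into_join (n : ℕ) (hn : 1 ≤ n) :
    ∃ ι : Matrix (Fin n) (Fin n) ℂ →⋆ₐ[ℂ]
        C(Set.Icc (0 : ℝ) 1, Matrix (Fin n × Fin n) (Fin n × Fin n) ℂ),
      Function.Injective ι ∧
      (∀ x : Matrix (Fin n) (Fin n) ℂ,
        ι x ⟨0, Set.left_mem_Icc.mpr zero_le_one⟩ = x ⊗ₖ (1 : Matrix (Fin n) (Fin n) ℂ)) ∧
      (∀ x : Matrix (Fin n) (Fin n) ℂ,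
        ι x ⟨1, Set.right_mem_Icc.mpr zero_le_one⟩ = (1 : Matrix (Fin n) (Fin n) ℂ) ⊗ₖ x) ∧
      (∀ v ∈ unitary (Matrix (Fin n) (Fin n) ℂ), ∀ x : Matrix (Fin n) (Fin n) ℂ,
        ∀ t : Set.Icc (0 : ℝ) 1,
          ι (v * x * star v) t = (v ⊗ₖ v) * ι x t * star (v ⊗ₖ v)) := by
  classical
  have hcont : ∀ x : Matrix (Fin n) (Fin n) ℂ,
      Continuous fun t : Set.Icc (0:ℝ) 1 =>
        Um n t * (x ⊗ₖ (1 : Matrix (Fin n) (Fin n) ℂ)) * star (Um n t.1) := by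
    intro x
    simp only [star_Um]
    have h1 : Continuous fun t : Set.Icc (0:ℝ) 1 => Um n t.1 :=
      (continuous_Um n).comp continuous_subtype_val
    exact (h1.mul continuous_const).mul ((continuous_Um n).comp continuous_subtype_val.neg)
  let f : Matrix (Fin n) (Fin n) ℂ → C(Set.Icc (0:ℝ) 1, Matrix (Fin n × Fin n) (Fin n × Fin n) ℂ) :=
    fun x => ContinuousMap.mk _ (hcont x)
  refine ⟨{ toFun := f
            map_one' := ?_
            map_mul' := ?_
            map_zero' := ?_
            map_add' := ?_
            commutes' := ?_
            map_star' := ?_ }, ?_, ?_, ?_, ?_⟩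
  · refine ContinuousMap.ext fun t => ?_
    show Um n t * ((1 : Matrix (Fin n) (Fin n) ℂ) ⊗ₖ 1) * star (Um n t.1) = 1
    simp [Matrix.one_kronecker_one, Um_unitary]
  · intro x y
    refine ContinuousMap.ext fun t => ?_
    show Um n t * ((x * y) ⊗ₖ (1 : Matrix (Fin n) (Fin n) ℂ)) * star (Um n t.1) = _
    have : (x * y) ⊗ₖ (1 : Matrix (Fin n) (Fin n) ℂ)
        = (x ⊗ₖ (1 : Matrix (Fin n) (Fin n) ℂ)) * (y ⊗ₖ 1) := by
      rw [← Matrix.mul_kronecker_mul, mul_one]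
    rw [this]
    exact conj_mul_aux _ _ _ (star_Um_mul n t)
  · refine ContinuousMap.ext fun t => ?_
    show Um n t * ((0 : Matrix (Fin n) (Fin n) ℂ) ⊗ₖ 1) * star (Um n t.1) = 0
    simp [Matrix.zero_kronecker]
  · intro x y
    refine ContinuousMap.ext fun t => ?_
    show Um n t * ((x + y) ⊗ₖ (1 : Matrix (Fin n) (Fin n) ℂ)) * star (Um n t.1)
      = Um n t * (x ⊗ₖ 1) * star (Um n t.1) + Um n t * (y ⊗ₖ 1) * star (Um n t.1)
    rw [Matrix.add_kronecker, Matrix.mul_add, Matrix.add_mul]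
  · intro r
    refine ContinuousMap.ext fun t => ?_
    show Um n t * ((algebraMap ℂ _ r) ⊗ₖ (1 : Matrix (Fin n) (Fin n) ℂ)) * star (Um n t.1) = _
    rw [Algebra.algebraMap_eq_smul_one, Matrix.smul_kronecker, Matrix.one_kronecker_one]
    simp [Um_unitary, Algebra.algebraMap_eq_smul_one]
  · intro x
    refine ContinuousMap.ext fun t => ?_
    show Um n t * ((star x) ⊗ₖ (1 : Matrix (Fin n) (Fin n) ℂ)) * star (Um n t.1)
        = star (Um n t * (x ⊗ₖ (1 : Matrix (Fin n) (Fin n) ℂ)) * star (Um n t.1))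
    rw [Matrix.star_mul, Matrix.star_mul, star_star, star_kron, star_one, Matrix.mul_assoc]
  · intro x y hxy
    have h0 := ContinuousMap.congr_fun hxy ⟨0, Set.left_mem_Icc.mpr zero_le_one⟩
    have h1 : x ⊗ₖ (1 : Matrix (Fin n) (Fin n) ℂ) = y ⊗ₖ (1 : Matrix (Fin n) (Fin n) ℂ) := by
      have h0' : Um n 0 * (x ⊗ₖ (1 : Matrix (Fin n) (Fin n) ℂ)) * star (Um n 0)
          = Um n 0 * (y ⊗ₖ (1 : Matrix (Fin n) (Fin n) ℂ)) * star (Um n 0) := h0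
      simpa [Um_zero] using h0'
    ext i k
    have h2 := congrFun (congrFun h1 (i, ⟨0, hn⟩)) (k, ⟨0, hn⟩)
    simpa [Matrix.kroneckerMap_apply, Matrix.one_apply] using h2
  · intro x
    show Um n 0 * (x ⊗ₖ 1) * star (Um n 0) = _
    simp [Um_zero]
  · intro x
    show Um n 1 * (x ⊗ₖ 1) * star (Um n 1) = _
    rw [Um_one, star_Fm, Fm_kron_comm, Matrix.mul_assoc, Fm_mul_Fm, Matrix.mul_one]
  · intro v hv x t
    show Um n t * ((v * x * star v) ⊗ₖ (1 : Matrix (Fin n) (Fin n) ℂ)) * star (Um n t.1)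
        = (v ⊗ₖ v) * (Um n t * (x ⊗ₖ 1) * star (Um n t.1)) * star (v ⊗ₖ v)
    have hv2 : v * star v = 1 := (Unitary.mem_iff.mp hv).2
    have hkey : (v * x * star v) ⊗ₖ (1 : Matrix (Fin n) (Fin n) ℂ)
        = (v ⊗ₖ v) * (x ⊗ₖ 1) * star (v ⊗ₖ v) := by
      rw [star_kron, ← Matrix.mul_kronecker_mul, ← Matrix.mul_kronecker_mul, Matrix.mul_one,
        hv2]
    rw [hkey]
    exact conj_comm_aux (Um n t) (v ⊗ₖ v) (x ⊗ₖ 1) (Um_comm_kron (n := n) (t := (t : ℝ)) v)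
end

section
/- Let G be a finite group, let B be a unital C*-algebra with an action β of G on B by star-algebra automorphisms, and let ν : G → U(M_n(ℂ)) be a unitary representation. Suppose (p_g)_{g∈G} is a family of central projections in B (p_g = p_g* = p_g², and p_g commutes with every element of B) which are pairwise orthogonal (p_g p_h = 0 for g ≠ h), sum to 1 (∑_{g∈G} p_g = 1), and satisfy β_g(p_h) = p_{gh} for all g, h ∈ G. Then, given any unital star-algebra homomorphism Ψ : M_n(ℂ) → B, the map Ψ'(x) := ∑_{g∈G} p_g · β_g(Ψ(ν_{g}* x ν_{g})) is a unital star-algebra homomorphism from M_n(ℂ) to B which is equivariant, i.e. β_h(Ψ'(x)) = Ψ'(ν_h x ν_h*) for all h ∈ G and x ∈ M_n(ℂ). -/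
open Matrix

/-- Let `G` be a finite group acting by star-algebra automorphisms `β`
on a unital C*-algebra `B`, let `ν : G → U(Mₙ(ℂ))` be a unitary representation, and let
`(p_g)_{g∈G}` be pairwise orthogonal central projections in `B` summing to `1` with
`β_g(p_h) = p_{gh}`.  Then for any unital star-algebra homomorphism `Ψ : Mₙ(ℂ) → B`, the
averaged map `Ψ'(x) = ∑_g p_g · β_g(Ψ(ν_g* x ν_g))` is a unital star-algebra
homomorphism which is equivariant: `β_h(Ψ'(x)) = Ψ'(ν_h x ν_h*)`. -/
theorem averaged_starAlgHom_is_equivariant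
    {G : Type*} [Group G] [Fintype G]
    {B : Type*} [CStarAlgebra B]
    (β : G →* (B ≃ₐ[ℂ] B)) (hβstar : ∀ (g : G) (b : B), β g (star b) = star (β g b))
    {n : ℕ} (hn : 1 ≤ n) (ν : G →* Matrix.unitaryGroup (Fin n) ℂ)
    (p : G → B)
    (hself : ∀ g, star (p g) = p g)
    (hidem : ∀ g, p g * p g = p g)
    (hcentral : ∀ g (b : B), p g * b = b * p g)
    (horth : ∀ g h, g ≠ h → p g * p h = 0)
    (hsum : ∑ g, p g = 1)
    (hperm : ∀ g h, β g (p h) = p (g * h))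
    (Ψ : Matrix (Fin n) (Fin n) ℂ →⋆ₐ[ℂ] B) :
    ∃ Ψ' : Matrix (Fin n) (Fin n) ℂ →⋆ₐ[ℂ] B,
      (∀ x : Matrix (Fin n) (Fin n) ℂ,
        Ψ' x = ∑ g, p g *
          β g (Ψ (star (ν g : Matrix (Fin n) (Fin n) ℂ) * x * (ν g : Matrix (Fin n) (Fin n) ℂ)))) ∧
      (∀ (h : G) (x : Matrix (Fin n) (Fin n) ℂ),
        β h (Ψ' x)
          = Ψ' ((ν h : Matrix (Fin n) (Fin n) ℂ) * x * star (ν h : Matrix (Fin n) (Fin n) ℂ))) := by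
  set u : G → Matrix (Fin n) (Fin n) ℂ := fun g => (ν g : Matrix (Fin n) (Fin n) ℂ) with hu
  have hsu : ∀ g, star (u g) * u g = 1 := fun g => (ν g).2.1
  have hus : ∀ g, u g * star (u g) = 1 := fun g => (ν g).2.2
  set f : Matrix (Fin n) (Fin n) ℂ → B :=
    fun x => ∑ g, p g * β g (Ψ (star (u g) * x * u g)) with hf
  -- diagonal / off-diagonal multiplication facts in B
  have hdiag : ∀ g (a b : B), (p g * a) * (p g * b) = p g * (a * b) := by
    intro g a b
    calc (p g * a) * (p g * b) = p g * (a * p g) * b := by rw [mul_assoc, mul_assoc, mul_assoc]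
      _ = p g * (p g * a) * b := by rw [hcentral g a]
      _ = (p g * p g) * (a * b) := by rw [← mul_assoc, mul_assoc]
      _ = p g * (a * b) := by rw [hidem]
  have hoff : ∀ g h (a b : B), g ≠ h → (p g * a) * (p h * b) = 0 := by
    intro g h a b hne
    calc (p g * a) * (p h * b) = p g * (a * p h) * b := by rw [mul_assoc, mul_assoc, mul_assoc]
      _ = (p g * p h) * (a * b) := by rw [← hcentral h a, ← mul_assoc, mul_assoc]
      _ = 0 := by rw [horth g h hne, zero_mul]
  have hmul : ∀ x y, f (x * y) = f x * f y := by
    intro x y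
    rw [hf]
    simp only [Finset.sum_mul_sum]
    refine Finset.sum_congr rfl fun g _ => Eq.symm ?_
    rw [Finset.sum_eq_single g]
    · have cancel : ∀ z : Matrix (Fin n) (Fin n) ℂ, u g * (star (u g) * z) = z := by
        intro z; rw [← mul_assoc, hus, one_mul]
      have key : star (u g) * (x * y) * u g
          = (star (u g) * x * u g) * (star (u g) * y * u g) := by
        simp only [mul_assoc, cancel]
      rw [hdiag, ← _root_.map_mul (β g), ← _root_.map_mul Ψ, ← key]
    · intro h _ hne
      exact hoff g h _ _ (Ne.symm hne)
    · intro hg; exact absurd (Finset.mem_univ g) hg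
  refine ⟨{ toFun := f
            map_one' := ?_
            map_mul' := hmul
            map_zero' := ?_
            map_add' := ?_
            commutes' := ?_
            map_star' := ?_ }, fun x => rfl, ?_⟩
  · show f 1 = 1
    rw [hf]
    simp only [mul_one, hsu, _root_.map_one]
    simpa using hsum
  · show f 0 = 0
    simp [hf]
  · intro x y
    show f (x + y) = f x + f y
    rw [hf]
    simp only [mul_add, add_mul, map_add, ← Finset.sum_add_distrib]
  · intro r
    show f (algebraMap ℂ (Matrix (Fin n) (Fin n) ℂ) r) = algebraMap ℂ B r
    rw [hf]
    have key : ∀ g, star (u g) * algebraMap ℂ (Matrix (Fin n) (Fin n) ℂ) r * u g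
        = algebraMap ℂ (Matrix (Fin n) (Fin n) ℂ) r := by
      intro g
      rw [Algebra.algebraMap_eq_smul_one, mul_smul_comm, mul_one, smul_mul_assoc, hsu]
    simp only [key, AlgHomClass.commutes, AlgEquiv.commutes, ← Finset.sum_mul, hsum, one_mul]
  · intro x
    show f (star x) = star (f x)
    rw [hf, star_sum]
    refine Finset.sum_congr rfl fun g _ => ?_
    have hst : star (star (u g) * x * u g) = star (u g) * star x * u g := by
      simp [StarMul.star_mul, mul_assoc]
    rw [StarMul.star_mul, hself, ← hβstar, ← map_star Ψ, hst, ← hcentral]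
  · intro h x
    show β h (f x) = f (u h * x * star (u h))
    rw [hf, map_sum]
    have cancel : ∀ z : Matrix (Fin n) (Fin n) ℂ, star (u h) * (u h * z) = z := by
      intro z; rw [← mul_assoc, hsu, one_mul]
    have step : ∀ g, β h (p g * β g (Ψ (star (u g) * x * u g)))
        = p (h * g) * β (h * g) (Ψ (star (u (h * g)) * (u h * x * star (u h)) * u (h * g))) := by
      intro g
      have huhg : u (h * g) = u h * u g := by rw [hu]; simp
      have hmat : star (u (h * g)) * (u h * x * star (u h)) * u (h * g)
          = star (u g) * x * u g := by
        simp only [huhg, StarMul.star_mul, mul_assoc, cancel]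
      have hcomp : β h (β g (Ψ (star (u g) * x * u g)))
          = β (h * g) (Ψ (star (u g) * x * u g)) := by
        rw [_root_.map_mul β h g]; rfl
      rw [hmat, _root_.map_mul (β h), hperm, hcomp]
    rw [Finset.sum_congr rfl fun g _ => step g]
    exact Equiv.sum_comp (Equiv.mulLeft h)
      (fun k => p k * β k (Ψ (star (u k) * (u h * x * star (u h)) * u k)))
end
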